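/- Let $n = 2$, $M > 0$, $\sigma = \frac{2M+1}{2}$, and $\alpha \in (0,1)$. For $\epsilon \in (0,1)$ define $\varphi_\epsilon(x) = 1 + \sigma|x|^2 - \left(\frac{\ln|x|}{\ln\epsilon}\right)^\alpha$ for $0 < |x| < 1$ (where $\ln|x|/\ln\epsilon > 0$ for $|x|,\epsilon \in (0,1)$). Let $\vec{b} \in C^1(B_1;\mathbb{R}^2)$ with $\|\vec{b}\|_{C^1(B_1)} \le M$. Then there exists $r_0 \in (0,1)$, depending only on $\alpha$ and $M$ and not on $\epsilon$, such that for all $x$ with $0 < |x| \le r_0$: $-\Delta\varphi_\epsilon(x) - \vec{b}(x)\cdot\nabla\varphi_\epsilon(x) + (2M+1)\varphi_\epsilon(x) < 0$. -/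

import Mathlib

open MeasureTheory Metric Real
open scoped RealInnerProductSpace

lemma auxF (σ α L u : ℝ) (hu0 : 0 < u) (hu1 : u < 1) (hL : L < 0) :
    HasDerivAt (fun v : ℝ => 1 + σ * v - (Real.log v / (2*L)) ^ α)
      (σ - α * (Real.log u / (2*L)) ^ (α-1) * u⁻¹ * (2*L)⁻¹) u := by
  have hlogu : Real.log u < 0 := Real.log_neg hu0 hu1
  have h2L : 2*L < 0 := by linarith
  have hs : 0 < Real.log u / (2*L) := div_pos_of_neg_of_neg hlogu h2L
  have h1 : HasDerivAt (fun v : ℝ => Real.log v / (2*L)) (u⁻¹ / (2*L)) u :=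
    (Real.hasDerivAt_log hu0.ne').div_const _
  have h2 : HasDerivAt (fun y : ℝ => y ^ α)
      (α * (Real.log u / (2*L)) ^ (α-1)) (Real.log u / (2*L)) :=
    Real.hasDerivAt_rpow_const (Or.inl hs.ne')
  have h3 := h2.comp u h1
  have h4 : HasDerivAt (fun v : ℝ => 1 + σ * v) σ u := by
    simpa using (hasDerivAt_id u).const_mul σ |>.const_add 1
  simp only [Function.comp_def] at h3
  refine (h4.sub h3).congr_deriv ?_
  ring

lemma auxF1 (σ α L u : ℝ) (hu0 : 0 < u) (hu1 : u < 1) (hL : L < 0) :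
    HasDerivAt (fun v : ℝ => σ - α * (Real.log v / (2*L)) ^ (α-1) * v⁻¹ * (2*L)⁻¹)
      (α*(1-α)*(Real.log u / (2*L))^(α-1-1) * u⁻¹ * u⁻¹ * (2*L)⁻¹ * (2*L)⁻¹
        + α*(Real.log u / (2*L))^(α-1) * u⁻¹ * u⁻¹ * (2*L)⁻¹) u := by
  have hlogu : Real.log u < 0 := Real.log_neg hu0 hu1
  have h2L : 2*L < 0 := by linarith
  have hs : 0 < Real.log u / (2*L) := div_pos_of_neg_of_neg hlogu h2L
  have h1 : HasDerivAt (fun v : ℝ => Real.log v / (2*L)) (u⁻¹ / (2*L)) u :=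
    (Real.hasDerivAt_log hu0.ne').div_const _
  have h2 : HasDerivAt (fun y : ℝ => y ^ (α-1))
      ((α-1) * (Real.log u / (2*L)) ^ (α-1-1)) (Real.log u / (2*L)) :=
    Real.hasDerivAt_rpow_const (Or.inl hs.ne')
  have h3 := h2.comp u h1
  have hinv : HasDerivAt (fun v : ℝ => v⁻¹) (-(u^2)⁻¹) u := hasDerivAt_inv hu0.ne'
  have h5 := ((h3.const_mul α).mul hinv).mul_const ((2*L)⁻¹)
  have h6 := (hasDerivAt_const u σ).sub h5
  simp only [Function.comp] at h6
  refine h6.congr_deriv ?_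
  rw [show ((u:ℝ)^2)⁻¹ = u⁻¹ * u⁻¹ by rw [sq, mul_inv]]
  ring

theorem barrier_function_subsolution_dim_two
    (M : ℝ) (hM : 0 < M)
    (α : ℝ) (hα : α ∈ Set.Ioo (0:ℝ) 1)
    (σ : ℝ) (hσ : σ = (2*M + 1) / 2)
    (b : EuclideanSpace ℝ (Fin 2) → EuclideanSpace ℝ (Fin 2))
    (hb : ContDiffOn ℝ 1 b (ball (0 : EuclideanSpace ℝ (Fin 2)) 1))
    (hbM : ∀ x ∈ ball (0 : EuclideanSpace ℝ (Fin 2)) 1,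
      ‖b x‖ ≤ M ∧ ‖fderiv ℝ b x‖ ≤ M) :
    ∃ r0 ∈ Set.Ioo (0:ℝ) 1, ∀ ε ∈ Set.Ioo (0:ℝ) 1,
      ∀ φ : EuclideanSpace ℝ (Fin 2) → ℝ,
        (∀ z, φ z = 1 + σ * ‖z‖ ^ 2 - (Real.log ‖z‖ / Real.log ε) ^ α) →
        ∀ x : EuclideanSpace ℝ (Fin 2), 0 < ‖x‖ → ‖x‖ ≤ r0 →
          -(∑ i, fderiv ℝ (fun z => fderiv ℝ φ z (EuclideanSpace.single i 1)) x
              (EuclideanSpace.single i 1))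
            - ⟪b x, gradient φ x⟫ + (2*M + 1) * φ x < 0 := by
  obtain ⟨hα0, hα1⟩ := hα
  have hσpos : 0 < σ := by rw [hσ]; linarith
  have h1α : 0 < 1 - α := by linarith
  refine ⟨min (((1-α)/(2*M))^2) (min (1/(4*M)) (1/2)), ⟨?_, ?_⟩, ?_⟩
  · refine lt_min (by positivity) (lt_min (by positivity) (by norm_num))
  · calc min (((1-α)/(2*M))^2) (min (1/(4*M)) (1/2)) ≤ min (1/(4*M)) (1/2) :=
        min_le_right _ _
      _ ≤ 1/2 := min_le_right _ _
      _ < 1 := by norm_num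
  intro ε hε φ hφ x ht0 htr
  set t := ‖x‖ with htdef
  have htr1 : t ≤ ((1-α)/(2*M))^2 := le_trans htr (min_le_left _ _)
  have htr2 : t ≤ 1/(4*M) := le_trans htr (le_trans (min_le_right _ _) (min_le_left _ _))
  have htr3 : t ≤ 1/2 := le_trans htr (le_trans (min_le_right _ _) (min_le_right _ _))
  have ht1 : t < 1 := by linarith
  have hL : Real.log ε < 0 := Real.log_neg hε.1 hε.2
  set L := Real.log ε with hLdef
  have hLne : L ≠ 0 := ne_of_lt hL
  have h2L : (2:ℝ)*L < 0 := by linarith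
  have h2Lne : (2:ℝ)*L ≠ 0 := ne_of_lt h2L
  have hiL : ((2:ℝ)*L)⁻¹ < 0 := inv_lt_zero.mpr h2L
  have hu0 : (0:ℝ) < t^2 := by positivity
  have hu0' : (t:ℝ)^2 ≠ 0 := ne_of_gt hu0
  have hiu : (0:ℝ) < (t^2)⁻¹ := inv_pos.mpr hu0
  have hu1 : t^2 < 1 := by nlinarith
  have hx0 : x ≠ 0 := norm_pos_iff.mp ht0
  -- rewrite φ in terms of the inner product
  have hφ2 : φ = fun z : EuclideanSpace ℝ (Fin 2) =>
      1 + σ * ⟪z, z⟫ - (Real.log ⟪z, z⟫ / (2*L)) ^ α := by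
    funext z
    rw [hφ z, real_inner_self_eq_norm_sq]
    congr 2
    rw [Real.log_pow]
    push_cast
    rw [mul_comm (2:ℝ) L, mul_comm (2:ℝ) (Real.log ‖z‖), mul_div_mul_right _ _ (two_ne_zero)]
  have hxx : (⟪x, x⟫ : ℝ) = t^2 := real_inner_self_eq_norm_sq x
  -- first derivative formula at any point with 0 < ‖z‖ < 1
  have hDq : ∀ z : EuclideanSpace ℝ (Fin 2),
      HasFDerivAt (fun w : EuclideanSpace ℝ (Fin 2) => (⟪w, w⟫ : ℝ))
        ((fderivInnerCLM ℝ (z, z)).comp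
          ((ContinuousLinearMap.id ℝ _).prod (ContinuousLinearMap.id ℝ _))) z :=
    fun z => (hasFDerivAt_id z).inner ℝ (hasFDerivAt_id z)
  have hder1 : ∀ z : EuclideanSpace ℝ (Fin 2), z ≠ 0 → ‖z‖ < 1 →
      HasFDerivAt φ
        ((σ - α * (Real.log ⟪z, z⟫ / (2*L)) ^ (α-1) * (⟪z, z⟫:ℝ)⁻¹ * (2*L)⁻¹) •
          ((fderivInnerCLM ℝ (z, z)).comp
            ((ContinuousLinearMap.id ℝ _).prod (ContinuousLinearMap.id ℝ _)))) z := by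
    intro z hz0 hz1
    have hz0' : 0 < ‖z‖ := norm_pos_iff.mpr hz0
    have hzz0 : (0:ℝ) < ⟪z, z⟫ := by
      rw [real_inner_self_eq_norm_sq]; positivity
    have hzz1 : (⟪z, z⟫:ℝ) < 1 := by
      rw [real_inner_self_eq_norm_sq]; nlinarith
    rw [hφ2]
    have h := HasDerivAt.comp_hasFDerivAt (f := fun w : EuclideanSpace ℝ (Fin 2) => (⟪w, w⟫ : ℝ)) z (auxF σ α L ⟪z, z⟫ hzz0 hzz1 hL) (hDq z)
    exact h
  have hfderiv_x := (hder1 x hx0 ht1).fderiv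
  -- gradient term
  have hgrad : ⟪b x, gradient φ x⟫
      = (σ - α * (Real.log (t^2) / (2*L)) ^ (α-1) * ((t:ℝ)^2)⁻¹ * (2*L)⁻¹)
          * (⟪x, b x⟫ + ⟪b x, x⟫) := by
    rw [real_inner_comm]
    rw [show (⟪gradient φ x, b x⟫ : ℝ) = fderiv ℝ φ x (b x) from
      InnerProductSpace.toDual_symm_apply]
    rw [hfderiv_x]
    simp only [ContinuousLinearMap.smul_apply, ContinuousLinearMap.coe_comp',
      Function.comp_apply, ContinuousLinearMap.prod_apply, ContinuousLinearMap.coe_id',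
      id_eq, fderivInnerCLM_apply, smul_eq_mul, hxx]
  -- second derivative terms
  have hsec : ∀ i : Fin 2,
      fderiv ℝ (fun z => fderiv ℝ φ z (EuclideanSpace.single i 1)) x
        (EuclideanSpace.single i 1)
      = (σ - α * (Real.log (t^2) / (2*L)) ^ (α-1) * ((t:ℝ)^2)⁻¹ * (2*L)⁻¹) * 2
        + (2 * x i) *
          ((α*(1-α)*(Real.log (t^2) / (2*L))^(α-1-1) * ((t:ℝ)^2)⁻¹ * ((t:ℝ)^2)⁻¹ * (2*L)⁻¹ * (2*L)⁻¹
            + α*(Real.log (t^2) / (2*L))^(α-1) * ((t:ℝ)^2)⁻¹ * ((t:ℝ)^2)⁻¹ * (2*L)⁻¹) * (2 * x i)) := by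
    intro i
    have hevent : (fun z => fderiv ℝ φ z (EuclideanSpace.single i 1)) =ᶠ[nhds x]
        (fun z : EuclideanSpace ℝ (Fin 2) =>
          (σ - α * (Real.log ⟪z, z⟫ / (2*L)) ^ (α-1) * (⟪z, z⟫:ℝ)⁻¹ * (2*L)⁻¹)
            * (⟪z, EuclideanSpace.single i 1⟫ + ⟪EuclideanSpace.single i 1, z⟫)) := by
      have h1 : ∀ᶠ z in nhds x, z ≠ 0 := eventually_ne_nhds hx0
      have h2 : ∀ᶠ z in nhds x, ‖z‖ < 1 :=
        (continuous_norm.continuousAt (x := x)).eventually_lt continuousAt_const ht1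
      filter_upwards [h1, h2] with z hz1 hz2
      rw [(hder1 z hz1 hz2).fderiv]
      simp only [ContinuousLinearMap.smul_apply, ContinuousLinearMap.coe_comp',
        Function.comp_apply, ContinuousLinearMap.prod_apply, ContinuousLinearMap.coe_id',
        id_eq, fderivInnerCLM_apply, smul_eq_mul]
    rw [hevent.fderiv_eq]
    have hc1 : HasFDerivAt (fun z : EuclideanSpace ℝ (Fin 2) =>
        σ - α * (Real.log ⟪z, z⟫ / (2*L)) ^ (α-1) * (⟪z, z⟫:ℝ)⁻¹ * (2*L)⁻¹)
        ((α*(1-α)*(Real.log ⟪x, x⟫ / (2*L))^(α-1-1) * (⟪x, x⟫:ℝ)⁻¹ * (⟪x, x⟫:ℝ)⁻¹ * (2*L)⁻¹ * (2*L)⁻¹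
            + α*(Real.log ⟪x, x⟫ / (2*L))^(α-1) * (⟪x, x⟫:ℝ)⁻¹ * (⟪x, x⟫:ℝ)⁻¹ * (2*L)⁻¹) •
          ((fderivInnerCLM ℝ (x, x)).comp
            ((ContinuousLinearMap.id ℝ _).prod (ContinuousLinearMap.id ℝ _)))) x := by
      have hzz0 : (0:ℝ) < ⟪x, x⟫ := by rw [hxx]; exact hu0
      have hzz1 : (⟪x, x⟫:ℝ) < 1 := by rw [hxx]; exact hu1
      have h := HasDerivAt.comp_hasFDerivAt (f := fun w : EuclideanSpace ℝ (Fin 2) => (⟪w, w⟫ : ℝ)) x (auxF1 σ α L ⟪x, x⟫ hzz0 hzz1 hL) (hDq x)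
      exact h
    have hlin : HasFDerivAt (fun z : EuclideanSpace ℝ (Fin 2) =>
        (⟪z, EuclideanSpace.single i 1⟫ + ⟪EuclideanSpace.single i 1, z⟫ : ℝ))
        (((fderivInnerCLM ℝ (x, EuclideanSpace.single i 1)).comp
          ((ContinuousLinearMap.id ℝ _).prod (0 : _ →L[ℝ] _))) +
         ((fderivInnerCLM ℝ (EuclideanSpace.single i 1, x)).comp
          ((0 : _ →L[ℝ] _).prod (ContinuousLinearMap.id ℝ _)))) x :=
      ((hasFDerivAt_id x).inner ℝ (hasFDerivAt_const _ x)).add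
        ((hasFDerivAt_const _ x).inner ℝ (hasFDerivAt_id x))
    have hm := (hc1.mul hlin).fderiv; simp only [Pi.mul_def] at hm; rw [hm]
    simp only [ContinuousLinearMap.add_apply, ContinuousLinearMap.smul_apply,
      ContinuousLinearMap.coe_comp', Function.comp_apply, ContinuousLinearMap.prod_apply,
      ContinuousLinearMap.coe_id', id_eq, ContinuousLinearMap.zero_apply,
      ContinuousLinearMap.coe_zero, Pi.zero_apply, fderivInnerCLM_apply, smul_eq_mul, hxx,
      EuclideanSpace.inner_single_left, EuclideanSpace.inner_single_right,
      EuclideanSpace.single_apply, map_one, conj_trivial]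
    simp only [inner_zero_left, inner_zero_right, eq_self_iff_true, if_true]
    ring
  -- sum of second derivatives
  have hx01 : x 0 * x 0 + x 1 * x 1 = t^2 := by
    have h := real_inner_self_eq_norm_sq x
    rw [PiLp.inner_apply] at h
    simpa [Fin.sum_univ_two, RCLike.inner_apply, conj_trivial, sq] using h
  have hsum : (∑ i : Fin 2, fderiv ℝ (fun z => fderiv ℝ φ z (EuclideanSpace.single i 1)) x
        (EuclideanSpace.single i 1))
      = 4*(σ - α * (Real.log (t^2) / (2*L)) ^ (α-1) * ((t:ℝ)^2)⁻¹ * (2*L)⁻¹)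
        + 4*(α*(1-α)*(Real.log (t^2) / (2*L))^(α-1-1) * ((t:ℝ)^2)⁻¹ * ((t:ℝ)^2)⁻¹ * (2*L)⁻¹ * (2*L)⁻¹
            + α*(Real.log (t^2) / (2*L))^(α-1) * ((t:ℝ)^2)⁻¹ * ((t:ℝ)^2)⁻¹ * (2*L)⁻¹) * t^2 := by
    rw [Fin.sum_univ_two, hsec 0, hsec 1]
    linear_combination (4*(α*(1-α)*(Real.log (t^2) / (2*L))^(α-1-1) * ((t:ℝ)^2)⁻¹ * ((t:ℝ)^2)⁻¹ * (2*L)⁻¹ * (2*L)⁻¹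
            + α*(Real.log (t^2) / (2*L))^(α-1) * ((t:ℝ)^2)⁻¹ * ((t:ℝ)^2)⁻¹ * (2*L)⁻¹)) * hx01
  have hlog2 : Real.log (t^2) = 2 * Real.log t := by
    rw [Real.log_pow]; push_cast; ring
  have hslog : Real.log t / L = Real.log (t^2) / (2*L) := by
    rw [hlog2, mul_comm (2:ℝ) L, mul_comm (2:ℝ) (Real.log t), mul_div_mul_right _ _ two_ne_zero]
  have hφx : φ x = 1 + σ * t^2 - (Real.log (t^2) / (2*L)) ^ α := by
    rw [hφ x, hslog]
  rw [hsum, hgrad, hφx, real_inner_comm (b x) x]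
  set P : ℝ := ⟪b x, x⟫ with hPdef
  set s : ℝ := Real.log (t^2) / (2*L) with hsdef
  have hlogt2neg : Real.log (t^2) < 0 := Real.log_neg hu0 hu1
  have hs : 0 < s := div_pos_of_neg_of_neg hlogt2neg h2L
  set A : ℝ := s ^ (α-1) with hAdef
  set B : ℝ := s ^ (α-1-1) with hBdef
  have hApos : 0 < A := Real.rpow_pos_of_pos hs _
  have hBpos : 0 < B := Real.rpow_pos_of_pos hs _
  have hsa : 0 ≤ s ^ α := (Real.rpow_pos_of_pos hs α).le
  have hAB : A = B * s := by
    rw [hAdef, hBdef, ← Real.rpow_add_one hs.ne']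
    congr 1
    ring
  have hseq : s = 2 * Real.log t * (2*L)⁻¹ := by
    rw [hsdef, hlog2, div_eq_mul_inv]
  -- bound on the inner product with b
  have hxball : x ∈ ball (0 : EuclideanSpace ℝ (Fin 2)) 1 := mem_ball_zero_iff.mpr ht1
  have hPabs : |P| ≤ M * t := by
    calc |P| ≤ ‖b x‖ * ‖x‖ := abs_real_inner_le_norm (b x) x
      _ ≤ M * t := mul_le_mul_of_nonneg_right (hbM x hxball).1 (norm_nonneg x)
  have hc1pos : 0 < σ - α * A * ((t:ℝ)^2)⁻¹ * (2*L)⁻¹ := by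
    have h := mul_neg_of_pos_of_neg (mul_pos (mul_pos hα0 hApos) hiu) hiL
    linarith
  clear_value t L P s A B
  clear hφ2 hDq hder1 hfderiv_x hsec hsum hgrad hφx hxx hx01 hPdef hsdef hAdef hBdef
  clear hxball hbM hb hx0 htdef htr hslog hlog2 hlogt2neg
  clear hLdef hφ
  -- the smallness condition  M * t * (-log t) ≤ 1 - α
  have hst : 0 < Real.sqrt t := Real.sqrt_pos.mpr ht0
  have hsqt : Real.sqrt t * Real.sqrt t = t := Real.mul_self_sqrt ht0.le
  have hlog1 : Real.log ((Real.sqrt t)⁻¹) ≤ (Real.sqrt t)⁻¹ - 1 :=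
    Real.log_le_sub_one_of_pos (inv_pos.mpr hst)
  have hneglog : -Real.log t ≤ 2 * (Real.sqrt t)⁻¹ := by
    have h1 : Real.log (Real.sqrt t) = Real.log t / 2 := Real.log_sqrt ht0.le
    rw [Real.log_inv] at hlog1
    linarith
  have hsq_le : Real.sqrt t ≤ (1-α)/(2*M) := by
    have h := Real.sqrt_le_sqrt htr1
    rwa [Real.sqrt_sq (by positivity)] at h
  have hcond : M * t * (-Real.log t) ≤ 1 - α := by
    have h1 : M * t * (-Real.log t) ≤ M * t * (2 * (Real.sqrt t)⁻¹) :=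
      mul_le_mul_of_nonneg_left hneglog (by positivity)
    have h2 : t * (Real.sqrt t)⁻¹ = Real.sqrt t := by
      field_simp; rw [Real.sq_sqrt ht0.le]
    have h2' : M * t * (2 * (Real.sqrt t)⁻¹) = 2 * M * Real.sqrt t := by
      linear_combination (2*M) * h2
    have h3 : 2 * M * Real.sqrt t ≤ 2 * M * ((1-α)/(2*M)) :=
      mul_le_mul_of_nonneg_left hsq_le (by positivity)
    have h4 : 2 * M * ((1-α)/(2*M)) = 1 - α := by field_simp
    linarith
  have hMt : M * t ≤ 1/4 := by
    have h := mul_le_mul_of_nonneg_left htr2 hM.le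
    have h4 : M * (1/(4*M)) = 1/4 := by field_simp
    linarith
  have hσt : σ * t^2 ≤ 1/4 := by
    have e2 : t*t ≤ (1/2)*(1/2) := mul_le_mul htr3 htr3 ht0.le (by norm_num)
    have e1 : (M*t)*t ≤ (1/4)*(1/2) := mul_le_mul hMt htr3 ht0.le (by norm_num)
    rw [hσ]
    linarith [e1, e2]
  -- domination of the first-order bad term by the good second-order term
  have h4pos : 0 ≤ 4*α*B*((t:ℝ)^2)⁻¹*((2*L)⁻¹)^2 :=
    mul_nonneg (mul_nonneg (mul_nonneg (by linarith) hBpos.le) hiu.le) (sq_nonneg _)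
  have hdom : -(α * A * ((t:ℝ)^2)⁻¹ * (2*L)⁻¹ * (2*(M*t)))
      ≤ 4*α*(1-α)*B*((t:ℝ)^2)⁻¹*((2*L)⁻¹)^2 := by
    have e1 : -(α * A * ((t:ℝ)^2)⁻¹ * (2*L)⁻¹ * (2*(M*t)))
        = (M*t*(-Real.log t)) * (4*α*B*((t:ℝ)^2)⁻¹*((2*L)⁻¹)^2) := by
      rw [hAB, hseq]; ring
    rw [e1]
    calc (M*t*(-Real.log t)) * (4*α*B*((t:ℝ)^2)⁻¹*((2*L)⁻¹)^2)
        ≤ (1-α) * (4*α*B*((t:ℝ)^2)⁻¹*((2*L)⁻¹)^2) :=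
          mul_le_mul_of_nonneg_right hcond h4pos
      _ = 4*α*(1-α)*B*((t:ℝ)^2)⁻¹*((2*L)⁻¹)^2 := by ring
  have key1 : -((σ - α * A * ((t:ℝ)^2)⁻¹ * (2*L)⁻¹) * (P + P))
      ≤ (σ - α * A * ((t:ℝ)^2)⁻¹ * (2*L)⁻¹) * (2*(M*t)) := by
    have h := abs_le.mp hPabs
    have h2 : 0 ≤ (σ - α * A * ((t:ℝ)^2)⁻¹ * (2*L)⁻¹) * (2*(M*t + P)) :=
      mul_nonneg hc1pos.le (by linarith [h.1])
    linarith [h2]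
  have hLapEq : 4*(σ - α * A * ((t:ℝ)^2)⁻¹ * (2*L)⁻¹)
        + 4*(α*(1-α)*B*((t:ℝ)^2)⁻¹*((t:ℝ)^2)⁻¹*(2*L)⁻¹*(2*L)⁻¹
            + α*A*((t:ℝ)^2)⁻¹*((t:ℝ)^2)⁻¹*(2*L)⁻¹) * t^2
      = 4*σ + 4*α*(1-α)*B*((t:ℝ)^2)⁻¹*((2*L)⁻¹)^2 := by
    have hinvtt : t^2 * (t^2)⁻¹ = 1 := mul_inv_cancel₀ hu0'
    linear_combination (4*α*(1-α)*B*((t:ℝ)^2)⁻¹*((2*L)⁻¹)^2 + 4*α*A*((t:ℝ)^2)⁻¹*(2*L)⁻¹) * hinvtt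
  rw [hLapEq, show (2*M+1 : ℝ) = 2*σ by rw [hσ]; ring]
  have m1 : 2*σ*(M*t) ≤ 2*σ*(1/4) := mul_le_mul_of_nonneg_left hMt (by positivity)
  have m2 : 2*σ*(σ*t^2) ≤ 2*σ*(1/4) := mul_le_mul_of_nonneg_left hσt (by positivity)
  have m3 : 0 ≤ σ * s^α := mul_nonneg hσpos.le hsa
  linarith [key1, hdom, m1, m2, m3, hσpos]
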